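/- Let $0 < H < 1/2$, set $p = 2/(1-2H)$, and for $t_i > 0$, $\Delta t > 0$ define $G(u, v) = \frac{1 - e^{-2ut_i}}{2u} \cdot \frac{1 - e^{-2vt_i}}{2v} \cdot (1 - e^{-(u+v)\Delta t})$ for $u, v > 0$. Then $\iint_{\{u = \theta^p, v = \eta^p : \theta^p + \eta^p \ge \Delta t^{-1},\ \theta, \eta \ge 0\}} G(\theta^p, \eta^p)\, d\theta\, d\eta = O(\Delta t^{1 - 1/p}) = O(\Delta t^{H + 1/2})$ as $\Delta t \to 0$, with constant depending on $t_i$ and $p$ but not on $\Delta t$. -/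

import Mathlib

open MeasureTheory Real Set


noncomputable def hfFA (ti p x : ℝ) : ℝ := if 0 ≤ x then min ti (2 * x ^ p)⁻¹ else 0

lemma hfFA_nonneg (ti p : ℝ) (hti : 0 ≤ ti) (x : ℝ) : 0 ≤ hfFA ti p x := by
  unfold hfFA
  split_ifs with h
  · exact le_min hti (by positivity)
  · exact le_refl 0

lemma hfFA_meas (ti p : ℝ) (hp : 0 ≤ p) : Measurable (hfFA ti p) := by
  unfold hfFA
  apply Measurable.ite measurableSet_Ici
  · exact measurable_const.min
      ((measurable_const.mul (Real.continuous_rpow_const hp).measurable).inv)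
  · exact measurable_const

lemma hfFA_le (ti p x : ℝ) (hx : 0 ≤ x) : hfFA ti p x ≤ (2 * x ^ p)⁻¹ := by
  unfold hfFA; rw [if_pos hx]; exact min_le_right _ _

lemma hfFA_le_ti (ti p x : ℝ) (hti : 0 ≤ ti) : hfFA ti p x ≤ ti := by
  unfold hfFA; split_ifs with h
  · exact min_le_left _ _
  · exact hti

/-- key single-factor bound -/
lemma hf_factor_le (ti p x : ℝ) (hti : 0 < ti) (hx : 0 ≤ x) :
    (1 - Real.exp (-2 * x ^ p * ti)) / (2 * x ^ p) ≤ hfFA ti p x := by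
  unfold hfFA
  rw [if_pos hx]
  rcases eq_or_lt_of_le (Real.rpow_nonneg hx p) with h | h
  · rw [← h]
    simp [hti.le]
  · refine le_min ?_ ?_
    · rw [div_le_iff₀ (by positivity)]
      have := Real.add_one_le_exp (-2 * x ^ p * ti)
      nlinarith [Real.exp_pos (-2 * x ^ p * ti)]
    · calc (1 - Real.exp (-2 * x ^ p * ti)) / (2 * x ^ p)
          ≤ 1 / (2 * x ^ p) := by
            gcongr
            linarith [Real.exp_nonneg (-2 * x ^ p * ti)]
        _ = (2 * x ^ p)⁻¹ := one_div _

lemma hf_factor_nonneg (ti p x : ℝ) (hti : 0 < ti) (hx : 0 ≤ x) :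
    0 ≤ (1 - Real.exp (-2 * x ^ p * ti)) / (2 * x ^ p) := by
  rcases eq_or_lt_of_le (Real.rpow_nonneg hx p) with h | h
  · rw [← h]; simp
  · apply div_nonneg ?_ (by positivity)
    have : Real.exp (-2 * x ^ p * ti) ≤ 1 := by
      rw [Real.exp_le_one_iff]
      nlinarith
    linarith

lemma hfFA_integrable (ti p : ℝ) (hti : 0 < ti) (hp : 1 < p) :
    Integrable (hfFA ti p) := by
  have hp0 : (0:ℝ) ≤ p := by linarith
  have hmeas := hfFA_meas ti p hp0
  rw [← integrableOn_univ]
  have hsplit : (univ : Set ℝ) = Iio 0 ∪ (Icc 0 1 ∪ Ioi 1) := by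
    ext x
    simp only [mem_univ, mem_union, mem_Iio, mem_Icc, mem_Ioi, true_iff]
    rcases lt_or_ge x 0 with h | h
    · exact Or.inl h
    · rcases le_or_gt x 1 with h2 | h2
      · exact Or.inr (Or.inl ⟨h, h2⟩)
      · exact Or.inr (Or.inr h2)
  rw [hsplit]
  apply IntegrableOn.union
  · have : EqOn (hfFA ti p) 0 (Iio 0) := by
      intro x hx
      simp only [hfFA, if_neg (not_le.mpr (mem_Iio.mp hx)), Pi.zero_apply]
    exact (integrableOn_congr_fun this measurableSet_Iio).mpr (integrableOn_zero)
  apply IntegrableOn.union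
  · apply Integrable.mono' ((integrableOn_const_iff (C := ti)).mpr (Or.inr measure_Icc_lt_top))
      hmeas.aestronglyMeasurable
    filter_upwards with x
    rw [Real.norm_eq_abs, abs_of_nonneg (hfFA_nonneg ti p hti.le x)]
    exact hfFA_le_ti ti p x hti.le
  · apply Integrable.mono' (integrableOn_Ioi_rpow_of_lt (show -p < -1 by linarith) one_pos)
      hmeas.aestronglyMeasurable
    rw [ae_restrict_iff' measurableSet_Ioi]
    filter_upwards with x hx
    have hx0 : (0:ℝ) < x := lt_trans one_pos hx
    rw [Real.norm_eq_abs, abs_of_nonneg (hfFA_nonneg ti p hti.le x)]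
    calc hfFA ti p x ≤ (2 * x ^ p)⁻¹ := hfFA_le ti p x hx0.le
      _ ≤ (x ^ p)⁻¹ := by
          apply inv_anti₀ (by positivity)
          nlinarith [Real.rpow_nonneg hx0.le p]
      _ = x ^ (-p) := (Real.rpow_neg hx0.le p).symm

/-- High-frequency regime estimate: with `p = 2/(1-2H)` and
`G(u,v) = ((1-e^{-2ut_i})/(2u)) ((1-e^{-2vt_i})/(2v)) (1-e^{-(u+v)Δt})`, the integral of
`G(θ^p, η^p)` over `{θ, η ≥ 0 : θ^p + η^p ≥ Δt⁻¹}` is `O(Δt^{1-1/p}) = O(Δt^{H+1/2})`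
as `Δt → 0`, with constant independent of `Δt`. -/
theorem high_frequency_regime_estimate (H ti p : ℝ) (h0 : 0 < H) (h1 : H < 1 / 2)
    (hti : 0 < ti) (hp : p = 2 / (1 - 2 * H)) :
    ∃ C : ℝ, 0 < C ∧ ∀ Δt : ℝ, Δt ∈ Set.Ioo (0 : ℝ) 1 →
      (∫ q in {q : ℝ × ℝ | 0 ≤ q.1 ∧ 0 ≤ q.2 ∧ Δt⁻¹ ≤ q.1 ^ p + q.2 ^ p},
          ((1 - Real.exp (-2 * q.1 ^ p * ti)) / (2 * q.1 ^ p)) *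
            ((1 - Real.exp (-2 * q.2 ^ p * ti)) / (2 * q.2 ^ p)) *
              (1 - Real.exp (-(q.1 ^ p + q.2 ^ p) * Δt))) ≤
        C * Δt ^ (1 - 1 / p) ∧ C * Δt ^ (1 - 1 / p) = C * Δt ^ (H + 1 / 2) := by
  have h2H : (0:ℝ) < 1 - 2 * H := by linarith
  have hp1 : 1 < p := by
    rw [hp, lt_div_iff₀ h2H]; linarith
  have hp0 : 0 < p := lt_trans one_pos hp1
  have hpne : p ≠ 0 := ne_of_gt hp0
  have hpm1 : p - 1 ≠ 0 := by intro h; linarith [hp1]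
  have hpexp : 1 - 1 / p = H + 1 / 2 := by
    rw [hp]; field_simp; ring
  set M := ∫ x, hfFA ti p x with hMdef
  have hM0 : 0 ≤ M := integral_nonneg (hfFA_nonneg ti p hti.le)
  have hfint := hfFA_integrable ti p hti hp1
  have hC0 : 0 ≤ M * 2 ^ (1 - 1/p) / (p - 1) :=
    div_nonneg (mul_nonneg hM0 (Real.rpow_nonneg (by norm_num) _)) (by linarith)
  refine ⟨M * 2 ^ (1 - 1/p) / (p - 1) + 1, by linarith, ?_⟩
  intro Δt hΔ
  obtain ⟨hΔ0, hΔ1⟩ := hΔ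
  refine ⟨?_, by rw [hpexp]⟩
  set a : ℝ := (2 * Δt) ^ (-(1/p)) with ha_def
  have h2Δ : (0:ℝ) < 2 * Δt := by linarith
  have ha : 0 < a := Real.rpow_pos_of_pos h2Δ _
  have hap : a ^ p = (2 * Δt)⁻¹ := by
    rw [ha_def, ← Real.rpow_mul h2Δ.le,
      show -(1/p) * p = -1 by field_simp, Real.rpow_neg_one]
  set S := {q : ℝ × ℝ | 0 ≤ q.1 ∧ 0 ≤ q.2 ∧ Δt⁻¹ ≤ q.1 ^ p + q.2 ^ p} with hSdef
  have hrpm : Measurable fun q : ℝ × ℝ => q.1 ^ p + q.2 ^ p :=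
    ((Real.continuous_rpow_const hp0.le).measurable.comp measurable_fst).add
      ((Real.continuous_rpow_const hp0.le).measurable.comp measurable_snd)
  have hS : MeasurableSet S := by
    have : S = {q : ℝ × ℝ | 0 ≤ q.1} ∩
        ({q : ℝ × ℝ | 0 ≤ q.2} ∩ {q : ℝ × ℝ | Δt⁻¹ ≤ q.1 ^ p + q.2 ^ p}) := rfl
    rw [this]
    exact (measurableSet_le measurable_const measurable_fst).inter
      ((measurableSet_le measurable_const measurable_snd).inter
        (measurableSet_le measurable_const hrpm))
  have hgint : Integrable (fun q : ℝ × ℝ => hfFA ti p q.1 * hfFA ti p q.2) := by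
    rw [Measure.volume_eq_prod]
    exact hfint.mul_prod hfint
  have hg0 : ∀ q : ℝ × ℝ, 0 ≤ hfFA ti p q.1 * hfFA ti p q.2 := fun q =>
    mul_nonneg (hfFA_nonneg ti p hti.le _) (hfFA_nonneg ti p hti.le _)
  -- Step 1: integrand ≤ g on S
  have step1 : (∫ q in S,
          ((1 - Real.exp (-2 * q.1 ^ p * ti)) / (2 * q.1 ^ p)) *
            ((1 - Real.exp (-2 * q.2 ^ p * ti)) / (2 * q.2 ^ p)) *
              (1 - Real.exp (-(q.1 ^ p + q.2 ^ p) * Δt))) ≤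
      ∫ q in S, hfFA ti p q.1 * hfFA ti p q.2 := by
    apply integral_mono_of_nonneg
    · refine ae_restrict_of_forall_mem hS fun q hq => ?_
      obtain ⟨hq1, hq2, hq3⟩ := hq
      have n1 := hf_factor_nonneg ti p q.1 hti hq1
      have n2 := hf_factor_nonneg ti p q.2 hti hq2
      have hs : 0 ≤ q.1 ^ p + q.2 ^ p := le_trans (inv_pos.mpr hΔ0).le hq3
      have n3 : 0 ≤ 1 - Real.exp (-(q.1 ^ p + q.2 ^ p) * Δt) := by
        have : Real.exp (-(q.1 ^ p + q.2 ^ p) * Δt) ≤ 1 := by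
          rw [Real.exp_le_one_iff]; nlinarith
        linarith
      exact mul_nonneg (mul_nonneg n1 n2) n3
    · exact hgint.restrict
    · refine ae_restrict_of_forall_mem hS fun q hq => ?_
      obtain ⟨hq1, hq2, hq3⟩ := hq
      have n1 := hf_factor_nonneg ti p q.1 hti hq1
      have n2 := hf_factor_nonneg ti p q.2 hti hq2
      have e3 : 1 - Real.exp (-(q.1 ^ p + q.2 ^ p) * Δt) ≤ 1 := by
        linarith [Real.exp_nonneg (-(q.1 ^ p + q.2 ^ p) * Δt)]
      refine le_trans (mul_le_of_le_one_right (mul_nonneg n1 n2) e3) ?_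
      exact mul_le_mul (hf_factor_le ti p q.1 hti hq1) (hf_factor_le ti p q.2 hti hq2)
        n2 (hfFA_nonneg ti p hti.le _)
  -- Step 2: S ⊆ A ∪ B
  have hsub : S ⊆ (Ici a ×ˢ (univ : Set ℝ)) ∪ ((univ : Set ℝ) ×ˢ Ici a) := by
    rintro q ⟨hq1, hq2, hq3⟩
    have key : a ^ p ≤ q.1 ^ p ∨ a ^ p ≤ q.2 ^ p := by
      by_contra hcon
      push_neg at hcon
      rw [hap] at hcon
      have h2d : (2:ℝ) * (2 * Δt)⁻¹ = Δt⁻¹ := by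
        rw [mul_inv]; field_simp
      nlinarith [hcon.1, hcon.2]
    have mono : ∀ x : ℝ, 0 ≤ x → a ^ p ≤ x ^ p → a ≤ x := by
      intro x hx hxp
      by_contra hlt
      push_neg at hlt
      exact absurd (Real.rpow_lt_rpow hx hlt hp0) (not_lt.mpr hxp)
    rcases key with h | h
    · exact Or.inl (mem_prod.mpr ⟨mono q.1 hq1 h, mem_univ _⟩)
    · exact Or.inr (mem_prod.mpr ⟨mem_univ _, mono q.2 hq2 h⟩)
  -- Step 3: monotonicity of measures
  have hmono : (∫ q in S, hfFA ti p q.1 * hfFA ti p q.2) ≤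
      (∫ q in (Ici a ×ˢ (univ : Set ℝ)), hfFA ti p q.1 * hfFA ti p q.2) +
        (∫ q in ((univ : Set ℝ) ×ˢ Ici a), hfFA ti p q.1 * hfFA ti p q.2) := by
    have hle : volume.restrict S ≤
        volume.restrict (Ici a ×ˢ (univ : Set ℝ)) + volume.restrict ((univ : Set ℝ) ×ˢ Ici a) :=
      le_trans (Measure.restrict_mono hsub le_rfl) (Measure.restrict_union_le _ _)
    calc (∫ q in S, hfFA ti p q.1 * hfFA ti p q.2)
        ≤ ∫ q, hfFA ti p q.1 * hfFA ti p q.2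
            ∂(volume.restrict (Ici a ×ˢ (univ : Set ℝ)) +
              volume.restrict ((univ : Set ℝ) ×ˢ Ici a)) :=
          integral_mono_measure hle (ae_of_all _ hg0)
            (hgint.restrict.add_measure hgint.restrict)
      _ = _ := integral_add_measure hgint.restrict hgint.restrict
  -- Step 4: product structure
  have prodA : (∫ q in (Ici a ×ˢ (univ : Set ℝ)), hfFA ti p q.1 * hfFA ti p q.2) =
      (∫ x in Ici a, hfFA ti p x) * M := by
    have hrw : (volume : Measure (ℝ × ℝ)).restrict (Ici a ×ˢ (univ : Set ℝ)) =
        ((volume : Measure ℝ).restrict (Ici a)).prod volume := by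
      rw [Measure.volume_eq_prod, ← Measure.prod_restrict, Measure.restrict_univ]
    rw [hrw]
    exact integral_prod_mul (hfFA ti p) (hfFA ti p)
  have prodB : (∫ q in ((univ : Set ℝ) ×ˢ Ici a), hfFA ti p q.1 * hfFA ti p q.2) =
      M * ∫ x in Ici a, hfFA ti p x := by
    have hrw : (volume : Measure (ℝ × ℝ)).restrict ((univ : Set ℝ) ×ˢ Ici a) =
        (volume : Measure ℝ).prod ((volume : Measure ℝ).restrict (Ici a)) := by
      rw [Measure.volume_eq_prod, ← Measure.prod_restrict, Measure.restrict_univ]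
    rw [hrw]
    exact integral_prod_mul (hfFA ti p) (hfFA ti p)
  -- Step 5: tail integral bound
  have hI0 : 0 ≤ ∫ x in Ici a, hfFA ti p x :=
    setIntegral_nonneg measurableSet_Ici fun x _ => hfFA_nonneg ti p hti.le x
  have hIbound : (∫ x in Ici a, hfFA ti p x) ≤ a ^ (1 - p) / (2 * (p - 1)) := by
    rw [integral_Ici_eq_integral_Ioi]
    have hb1 : (∫ x in Ioi a, hfFA ti p x) ≤ ∫ x in Ioi a, x ^ (-p) / 2 := by
      apply setIntegral_mono_on hfint.integrableOn
        ((integrableOn_Ioi_rpow_of_lt (show -p < -1 by linarith) ha).div_const 2)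
        measurableSet_Ioi
      intro x hx
      have hx0 : 0 < x := lt_trans ha hx
      calc hfFA ti p x ≤ (2 * x ^ p)⁻¹ := hfFA_le ti p x hx0.le
        _ = x ^ (-p) / 2 := by
            rw [Real.rpow_neg hx0.le, mul_inv]
            ring
    have hb2 : (∫ x in Ioi a, x ^ (-p) / 2) = a ^ (1 - p) / (2 * (p - 1)) := by
      rw [integral_div, integral_Ioi_rpow_of_lt (show -p < -1 by linarith) ha,
        show -p + 1 = 1 - p by ring]
      have h1p : (1:ℝ) - p ≠ 0 := by intro h; apply hpm1; linarith
      field_simp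
      ring
    linarith
  -- Step 6: exponent computation
  have haexp : a ^ (1 - p) = 2 ^ (1 - 1/p) * Δt ^ (1 - 1/p) := by
    rw [ha_def, ← Real.rpow_mul h2Δ.le,
      show -(1/p) * (1 - p) = 1 - 1/p by field_simp; ring]
    exact Real.mul_rpow (by norm_num) hΔ0.le
  -- Assemble
  have hpow0 : 0 < Δt ^ (1 - 1/p) := Real.rpow_pos_of_pos hΔ0 _
  have hbig : (∫ x in Ici a, hfFA ti p x) * M + M * (∫ x in Ici a, hfFA ti p x) ≤
      (M * 2 ^ (1 - 1/p) / (p - 1)) * Δt ^ (1 - 1/p) := by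
    have h1' := mul_le_mul_of_nonneg_right hIbound hM0
    have h2' := mul_le_mul_of_nonneg_left hIbound hM0
    have heq : (a ^ (1 - p) / (2 * (p - 1))) * M + M * (a ^ (1 - p) / (2 * (p - 1))) =
        (M * 2 ^ (1 - 1/p) / (p - 1)) * Δt ^ (1 - 1/p) := by
      rw [haexp]
      field_simp
      ring
    linarith
  calc (∫ q in S,
          ((1 - Real.exp (-2 * q.1 ^ p * ti)) / (2 * q.1 ^ p)) *
            ((1 - Real.exp (-2 * q.2 ^ p * ti)) / (2 * q.2 ^ p)) *
              (1 - Real.exp (-(q.1 ^ p + q.2 ^ p) * Δt)))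
      ≤ ∫ q in S, hfFA ti p q.1 * hfFA ti p q.2 := step1
    _ ≤ _ + _ := hmono
    _ = (∫ x in Ici a, hfFA ti p x) * M + M * (∫ x in Ici a, hfFA ti p x) := by
        rw [prodA, prodB]
    _ ≤ (M * 2 ^ (1 - 1/p) / (p - 1)) * Δt ^ (1 - 1/p) := hbig
    _ ≤ (M * 2 ^ (1 - 1/p) / (p - 1) + 1) * Δt ^ (1 - 1/p) := by nlinarith
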